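/- (Deterministic cumulative external regret bound) Let k ≥ 0, n ≥ 1, T ≥ 1, λ > 0, L > 0, and B ≥ 0. Let a_1, ..., a_T ∈ {1,...,n} and z_0, ..., z_{T-1} ∈ ℝ^{k+1} with ‖z_{t-1}‖₂ ≤ L for all t. Define Gram matrices V_0(a) = λ I_{k+1} for each a and V_t(a) = V_{t-1}(a) + z_{t-1} z_{t-1}^T · 1{a = a_t}. Let ρ_1, ..., ρ_T ≥ 0 satisfy ρ_t ≤ 2B · min{1, ‖z_{t-1}‖_{V_{t-1}(a_t)^{-1}}} for every t. Then Σ_{t=1}^T ρ_t ≤ 2B √( 2 T n (k+1) log(1 + T L² / (n λ (k+1))) ). -/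

import Mathlib

open Matrix

private lemma psd_vecMulVec {d : ℕ} (v : Fin d → ℝ) : (Matrix.vecMulVec v v).PosSemidef := by
  rw [Matrix.vecMulVec_eq Unit]
  have h : Matrix.replicateCol Unit v = (Matrix.replicateRow Unit v)ᴴ := by
    ext i j; simp [Matrix.replicateCol, Matrix.replicateRow]
  rw [h]
  exact Matrix.posSemidef_conjTranspose_mul_self _

private lemma trace_eq_sum_eigs {d : ℕ} {A : Matrix (Fin d) (Fin d) ℝ} (hA : A.IsHermitian) :
    A.trace = ∑ i, hA.eigenvalues i := by
  nth_rewrite 1 [hA.spectral_theorem]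
  rw [Unitary.conjStarAlgAut_apply, Matrix.trace_mul_cycle]
  rw [Unitary.coe_star_mul_self, Matrix.one_mul]
  simp [Matrix.trace_diagonal]

private lemma det_rank_one {d : ℕ} {A : Matrix (Fin d) (Fin d) ℝ} (hA : A.PosDef)
    (v : Fin d → ℝ) :
    (A + Matrix.vecMulVec v v).det = A.det * (1 + v ⬝ᵥ (A⁻¹ *ᵥ v)) := by
  rw [Matrix.vecMulVec_eq Unit,
    Matrix.det_add_replicateCol_mul_replicateRow (isUnit_iff_ne_zero.2 hA.det_pos.ne') v v]
  congr 1
  rw [Matrix.mul_assoc, ← Matrix.replicateCol_mulVec, Matrix.det_unique]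
  simp

private lemma amgm_prod_le {ι : Type*} [Fintype ι] [Nonempty ι] (f : ι → ℝ)
    (hf : ∀ i, 0 ≤ f i) :
    ∏ i, f i ≤ ((∑ i, f i) / (Fintype.card ι)) ^ (Fintype.card ι) := by
  set D : ℕ := Fintype.card ι with hD
  have hD0 : 0 < (D : ℝ) := by
    have := Fintype.card_pos (α := ι); exact_mod_cast this
  have key := Real.geom_mean_le_arith_mean_weighted Finset.univ (fun _ => (D : ℝ)⁻¹) f
    (fun _ _ => by positivity)
    (by simp [Finset.card_univ, ← hD, mul_inv_cancel₀ hD0.ne'])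
    (fun i _ => hf i)
  have hnn : 0 ≤ ∏ i, f i ^ ((D : ℝ)⁻¹) :=
    Finset.prod_nonneg fun i _ => Real.rpow_nonneg (hf i) _
  have hpow := pow_le_pow_left₀ hnn key D
  calc ∏ i, f i = (∏ i, f i ^ ((D : ℝ)⁻¹)) ^ D := by
        rw [← Finset.prod_pow]
        refine Finset.prod_congr rfl fun i _ => ?_
        rw [← Real.rpow_natCast (f i ^ ((D : ℝ)⁻¹)) D, ← Real.rpow_mul (hf i),
          inv_mul_cancel₀ hD0.ne', Real.rpow_one]
    _ ≤ (∑ i ∈ Finset.univ, (D : ℝ)⁻¹ * f i) ^ D := hpow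
    _ = ((∑ i, f i) / (D : ℝ)) ^ D := by
        rw [← Finset.mul_sum]; ring_nf

private lemma min_one_le_two_log {x : ℝ} (hx : 0 ≤ x) : min 1 x ≤ 2 * Real.log (1 + x) := by
  rcases le_or_gt x 1 with h | h
  · rw [min_eq_right h]
    have hE : (0 : ℝ) < Real.exp (x / 2) := Real.exp_pos _
    have h1 : (1 - x / 2) * Real.exp (x / 2) ≤ 1 := by
      have h2 : -(x / 2) + 1 ≤ Real.exp (-(x / 2)) := Real.add_one_le_exp _
      have h3 : Real.exp (-(x / 2)) * Real.exp (x / 2) = 1 := by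
        rw [← Real.exp_add]; norm_num
      nlinarith [mul_le_mul_of_nonneg_right h2 hE.le]
    have h4 : Real.exp (x / 2) ≤ 1 + x := by nlinarith [mul_nonneg hx (sub_nonneg.2 h)]
    have h5 : x / 2 ≤ Real.log (1 + x) :=
      (Real.le_log_iff_exp_le (by linarith)).2 h4
    linarith
  · rw [min_eq_left h.le]
    have h4 : Real.exp (1 / 2 : ℝ) ≤ 2 := by
      have h5 : Real.exp (1 / 2 : ℝ) * Real.exp (1 / 2 : ℝ) = Real.exp 1 := by
        rw [← Real.exp_add]; norm_num
      nlinarith [Real.exp_one_lt_d9, Real.exp_pos (1 / 2 : ℝ)]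
    have h6 : (1 / 2 : ℝ) ≤ Real.log 2 := (Real.le_log_iff_exp_le two_pos).2 h4
    have h7 : Real.log 2 ≤ Real.log (1 + x) := Real.log_le_log two_pos (by linarith)
    linarith

private lemma telescope : ∀ (T : ℕ) (F : ℕ → ℝ) (g : Fin T → ℝ),
    (∀ t : Fin T, F (t.val + 1) = F t.val + g t) → F T = F 0 + ∑ t, g t := by
  intro T
  induction T with
  | zero => intro F g _; simp
  | succ T ih =>
    intro F g h
    rw [Fin.sum_univ_castSucc]
    have h1 := ih F (fun t => g t.castSucc) (fun t => h t.castSucc)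
    have h2 := h (Fin.last T)
    simp only [Fin.val_last] at h2
    rw [h2, h1]; ring


/-!
STATEMENT 15 (Deterministic cumulative external regret bound): rounds are indexed by
`t : Fin T` (standing for the paper's round `t+1`, so `z t` is the paper's `z_t`
context at the beginning of that round, `a t` the action played, and `V ↑t act` the
paper's `V_t(act)`).  Gram matrices start at `λ I_{k+1}` and only the played action's
matrix is updated with the rank-one term.  If
`ρ_t ≤ 2B min{1, ‖z_{t-1}‖_{V_{t-1}(a_t)⁻¹}}` for every round, then
`∑_t ρ_t ≤ 2B √(2Tn(k+1) log(1 + TL²/(nλ(k+1))))`.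
-/
theorem cumulative_external_regret_bound
    (k n T : ℕ) (hn : 1 ≤ n) (hT : 1 ≤ T)
    (lam L B : ℝ) (hlam : 0 < lam) (hL : 0 < L) (hB : 0 ≤ B)
    (a : Fin T → Fin n) (z : Fin T → Fin (k + 1) → ℝ)
    (hz : ∀ t : Fin T, Real.sqrt (∑ i, (z t i) ^ 2) ≤ L)
    (V : ℕ → Fin n → Matrix (Fin (k + 1)) (Fin (k + 1)) ℝ)
    (hV0 : ∀ act : Fin n, V 0 act = lam • (1 : Matrix (Fin (k + 1)) (Fin (k + 1)) ℝ))
    (hVrec : ∀ (t : Fin T) (act : Fin n),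
      V ((t : ℕ) + 1) act =
        V (t : ℕ) act + if act = a t then Matrix.vecMulVec (z t) (z t) else 0)
    (ρ : Fin T → ℝ) (hρ0 : ∀ t, 0 ≤ ρ t)
    (hρ : ∀ t : Fin T,
      ρ t ≤ 2 * B * min 1 (Real.sqrt (z t ⬝ᵥ ((V (t : ℕ) (a t))⁻¹ *ᵥ z t)))) :
    ∑ t, ρ t ≤
      2 * B * Real.sqrt (2 * T * n * ((k : ℝ) + 1) *
        Real.log (1 + T * L ^ 2 / (n * lam * (k + 1)))) := by
  classical
  haveI : Nonempty (Fin n) := ⟨⟨0, hn⟩⟩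
  set X : ℝ := 1 + T * L ^ 2 / (n * lam * (k + 1)) with hX
  set D : ℝ := (n : ℝ) * ((k : ℝ) + 1) with hD
  have hD0 : 0 < D := by positivity
  -- positive definiteness
  have hpos : ∀ m : ℕ, m ≤ T → ∀ act, (V m act).PosDef := by
    intro m
    induction m with
    | zero =>
      intro _ act
      rw [hV0 act, Matrix.smul_one_eq_diagonal]
      exact Matrix.posDef_diagonal_iff.2 fun _ => hlam
    | succ m ih =>
      intro hm act
      have hmT : m < T := hm
      rw [hVrec ⟨m, hmT⟩ act]
      by_cases h : act = a ⟨m, hmT⟩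
      · rw [if_pos h]
        exact (ih hmT.le act).add_posSemidef (psd_vecMulVec _)
      · rw [if_neg h, add_zero]
        exact ih hmT.le act
  have hposT : ∀ t : Fin T, (V (t : ℕ) (a t)).PosDef := fun t => hpos t t.2.le (a t)
  -- nonnegativity of the weights
  have hw0 : ∀ t : Fin T, 0 ≤ z t ⬝ᵥ ((V (t : ℕ) (a t))⁻¹ *ᵥ z t) := by
    intro t
    have hp := (hposT t).inv.posSemidef
    simpa using hp.dotProduct_mulVec_nonneg (z t)
  -- log det telescoping
  have hlogstep : ∀ t : Fin T,
      (∑ act, Real.log ((V ((t : ℕ) + 1) act).det)) =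
      (∑ act, Real.log ((V (t : ℕ) act).det)) +
        Real.log (1 + z t ⬝ᵥ ((V (t : ℕ) (a t))⁻¹ *ᵥ z t)) := by
    intro t
    have hpt : ∀ act, Real.log ((V ((t : ℕ) + 1) act).det) =
        Real.log ((V (t : ℕ) act).det) +
          (if act = a t then Real.log (1 + z t ⬝ᵥ ((V (t : ℕ) (a t))⁻¹ *ᵥ z t)) else 0) := by
      intro act
      rw [hVrec t act]
      by_cases h : act = a t
      · subst h
        rw [if_pos rfl, if_pos rfl, det_rank_one (hposT t) (z t),
          Real.log_mul (hposT t).det_pos.ne' (by have := hw0 t; positivity)]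
      · rw [if_neg h, if_neg h, add_zero, add_zero]
    calc (∑ act, Real.log ((V ((t : ℕ) + 1) act).det))
        = ∑ act, (Real.log ((V (t : ℕ) act).det) +
            (if act = a t then
              Real.log (1 + z t ⬝ᵥ ((V (t : ℕ) (a t))⁻¹ *ᵥ z t)) else 0)) :=
          Finset.sum_congr rfl fun act _ => hpt act
      _ = _ := by
          rw [Finset.sum_add_distrib, Finset.sum_ite_eq' Finset.univ (a t)]
          simp
  have hG : (∑ act, Real.log ((V T act).det)) = (∑ act, Real.log ((V 0 act).det)) +
      ∑ t : Fin T, Real.log (1 + z t ⬝ᵥ ((V (t : ℕ) (a t))⁻¹ *ᵥ z t)) :=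
    telescope T (fun m => ∑ act, Real.log ((V m act).det))
      (fun t => Real.log (1 + z t ⬝ᵥ ((V (t : ℕ) (a t))⁻¹ *ᵥ z t))) hlogstep
  -- trace telescoping
  have htrstep : ∀ t : Fin T,
      (∑ act, (V ((t : ℕ) + 1) act).trace) =
      (∑ act, (V (t : ℕ) act).trace) + ∑ i, (z t i) ^ 2 := by
    intro t
    have hpt : ∀ act, (V ((t : ℕ) + 1) act).trace =
        (V (t : ℕ) act).trace + (if act = a t then ∑ i, (z t i) ^ 2 else 0) := by
      intro act
      rw [hVrec t act]
      by_cases h : act = a t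
      · rw [if_pos h, if_pos h, Matrix.trace_add]
        congr 1
        simp [Matrix.trace, Matrix.diag, Matrix.vecMulVec_apply, sq]
      · rw [if_neg h, if_neg h, add_zero, add_zero]
    calc (∑ act, (V ((t : ℕ) + 1) act).trace)
        = ∑ act, ((V (t : ℕ) act).trace + (if act = a t then ∑ i, (z t i) ^ 2 else 0)) :=
          Finset.sum_congr rfl fun act _ => hpt act
      _ = _ := by
          rw [Finset.sum_add_distrib, Finset.sum_ite_eq' Finset.univ (a t)]
          simp
  have hTr : (∑ act, (V T act).trace) = (∑ act, (V 0 act).trace) +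
      ∑ t : Fin T, ∑ i, (z t i) ^ 2 :=
    telescope T (fun m => ∑ act, (V m act).trace)
      (fun t => ∑ i, (z t i) ^ 2) htrstep
  -- value of things at time 0
  have htr0 : (∑ act, (V 0 act).trace) = D * lam := by
    rw [hD]
    have : ∀ act : Fin n, (V 0 act).trace = ((k : ℝ) + 1) * lam := by
      intro act
      rw [hV0 act, Matrix.trace_smul, Matrix.trace_one]
      simp [smul_eq_mul]
      ring
    rw [Finset.sum_congr rfl fun act _ => this act]
    simp [Finset.sum_const, Finset.card_univ]
    ring
  have hG0 : (∑ act, Real.log ((V 0 act).det)) = D * Real.log lam := by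
    rw [hD]
    have : ∀ act : Fin n, Real.log ((V 0 act).det) = ((k : ℝ) + 1) * Real.log lam := by
      intro act
      rw [hV0 act, Matrix.det_smul, Matrix.det_one, mul_one, Real.log_pow]
      simp
    rw [Finset.sum_congr rfl fun act _ => this act]
    simp [Finset.sum_const, Finset.card_univ]
    ring
  -- trace bound
  have hzsq : ∀ t : Fin T, (∑ i, (z t i) ^ 2) ≤ L ^ 2 := by
    intro t
    have h1 : 0 ≤ ∑ i, (z t i) ^ 2 := Finset.sum_nonneg fun i _ => sq_nonneg _
    calc (∑ i, (z t i) ^ 2) = Real.sqrt (∑ i, (z t i) ^ 2) ^ 2 := (Real.sq_sqrt h1).symm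
      _ ≤ L ^ 2 := by
          have := hz t
          have h2 := Real.sqrt_nonneg (∑ i, (z t i) ^ 2)
          nlinarith
  have htrT : (∑ act, (V T act).trace) ≤ D * lam + T * L ^ 2 := by
    rw [hTr, htr0]
    have : (∑ t : Fin T, ∑ i, (z t i) ^ 2) ≤ ∑ _t : Fin T, L ^ 2 :=
      Finset.sum_le_sum fun t _ => hzsq t
    simp only [Finset.sum_const, Finset.card_univ, Fintype.card_fin, nsmul_eq_mul] at this
    linarith
  -- eigenvalue facts
  have hH : ∀ act, (V T act).IsHermitian := fun act => (hpos T le_rfl act).1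
  have heig_nn : ∀ (act : Fin n) (i : Fin (k + 1)), 0 ≤ (hH act).eigenvalues i :=
    fun act i => (hpos T le_rfl act).posSemidef.eigenvalues_nonneg i
  have hdet_eq : ∀ act, (V T act).det = ∏ i, (hH act).eigenvalues i := by
    intro act
    have h1 := (hH act).det_eq_prod_eigenvalues
    simpa using h1
  have htr_eq : ∀ act, (V T act).trace = ∑ i, (hH act).eigenvalues i :=
    fun act => trace_eq_sum_eigs (hH act)
  -- AM-GM
  have hcard : (Fintype.card (Fin n × Fin (k + 1)) : ℝ) = D := by
    simp [hD]
  have hAM := amgm_prod_le (ι := Fin n × Fin (k + 1))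
      (fun p => (hH p.1).eigenvalues p.2) (fun p => heig_nn p.1 p.2)
  have hprod_eq : (∏ p : Fin n × Fin (k + 1), (hH p.1).eigenvalues p.2) =
      ∏ act, (V T act).det := by
    rw [Fintype.prod_prod_type]
    exact Finset.prod_congr rfl fun act _ => (hdet_eq act).symm
  have hsum_eq : (∑ p : Fin n × Fin (k + 1), (hH p.1).eigenvalues p.2) =
      ∑ act, (V T act).trace := by
    rw [Fintype.sum_prod_type]
    exact Finset.sum_congr rfl fun act _ => (htr_eq act).symm
  -- bound on sum of logs
  have hdetpos : ∀ act, 0 < (V T act).det := fun act => (hpos T le_rfl act).det_pos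
  have hprodpos : 0 < ∏ act, (V T act).det := Finset.prod_pos fun act _ => hdetpos act
  have hSge : D * lam ≤ ∑ act, (V T act).trace := by
    rw [hTr, htr0]
    have : (0:ℝ) ≤ ∑ t : Fin T, ∑ i, (z t i) ^ 2 :=
      Finset.sum_nonneg fun t _ => Finset.sum_nonneg fun i _ => sq_nonneg _
    linarith
  have hSpos : 0 < ∑ act, (V T act).trace := lt_of_lt_of_le (by positivity) hSge
  have hXpos : 0 < X := by
    rw [hX]; positivity
  have hGT : (∑ act, Real.log ((V T act).det)) ≤ D * Real.log lam + D * Real.log X := by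
    have h1 : (∑ act, Real.log ((V T act).det)) = Real.log (∏ act, (V T act).det) :=
      (Real.log_prod fun act _ => (hdetpos act).ne').symm
    have hcardN : Fintype.card (Fin n × Fin (k + 1)) = n * (k + 1) := by simp
    have h2 : (∏ act, (V T act).det) ≤ ((∑ act, (V T act).trace) / D) ^ (n * (k + 1)) := by
      rw [← hprod_eq]
      calc (∏ p : Fin n × Fin (k + 1), (hH p.1).eigenvalues p.2)
          ≤ ((∑ p : Fin n × Fin (k + 1), (hH p.1).eigenvalues p.2) /
              (Fintype.card (Fin n × Fin (k + 1)))) ^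
              (Fintype.card (Fin n × Fin (k + 1))) := hAM
        _ = ((∑ act, (V T act).trace) / D) ^ (n * (k + 1)) := by rw [hsum_eq, hcard, hcardN]
    have hSD : 0 < (∑ act, (V T act).trace) / D := div_pos hSpos hD0
    have h3 : Real.log (∏ act, (V T act).det) ≤ (n * (k + 1) : ℕ) * Real.log ((∑ act, (V T act).trace) / D) := by
      rw [← Real.log_pow]
      exact Real.log_le_log hprodpos h2
    have h4 : ((n * (k + 1) : ℕ) : ℝ) = D := by push_cast [hD]; ring
    have h5 : Real.log ((∑ act, (V T act).trace) / D) ≤ Real.log lam + Real.log X := by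
      have h6 : (∑ act, (V T act).trace) / D ≤ lam * X := by
        rw [hX]
        rw [div_le_iff₀ hD0]
        have : lam * (1 + ↑T * L ^ 2 / (↑n * lam * (↑k + 1))) * D =
            D * lam + T * L ^ 2 := by
          field_simp [hD]
          ring
        rw [this]
        exact htrT
      calc Real.log ((∑ act, (V T act).trace) / D) ≤ Real.log (lam * X) := Real.log_le_log hSD h6
        _ = Real.log lam + Real.log X := Real.log_mul hlam.ne' hXpos.ne'
    calc (∑ act, Real.log ((V T act).det))
        = Real.log (∏ act, (V T act).det) := h1
      _ ≤ (n * (k + 1) : ℕ) * Real.log ((∑ act, (V T act).trace) / D) := h3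
      _ = D * Real.log ((∑ act, (V T act).trace) / D) := by rw [h4]
      _ ≤ D * (Real.log lam + Real.log X) := by
          exact mul_le_mul_of_nonneg_left h5 hD0.le
      _ = D * Real.log lam + D * Real.log X := by ring
  -- sum of log(1 + w) bound
  have hlogsum : (∑ t : Fin T, Real.log (1 + z t ⬝ᵥ ((V (t : ℕ) (a t))⁻¹ *ᵥ z t))) ≤
      D * Real.log X := by
    rw [hG0] at hG
    linarith [hGT, hG.le, hG.ge]
  -- final assembly
  set m : Fin T → ℝ := fun t => min 1 (Real.sqrt (z t ⬝ᵥ ((V (t : ℕ) (a t))⁻¹ *ᵥ z t)))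
    with hm
  have hm0 : ∀ t, 0 ≤ m t := fun t => le_min zero_le_one (Real.sqrt_nonneg _)
  have hmsq : ∀ t, m t ^ 2 ≤ 2 * Real.log (1 + z t ⬝ᵥ ((V (t : ℕ) (a t))⁻¹ *ᵥ z t)) := by
    intro t
    have hW := hw0 t
    have hmin : m t ^ 2 = min 1 (z t ⬝ᵥ ((V (t : ℕ) (a t))⁻¹ *ᵥ z t)) := by
      rcases le_or_gt (z t ⬝ᵥ ((V (t : ℕ) (a t))⁻¹ *ᵥ z t)) 1 with h | h
      · have hmt : m t = Real.sqrt (z t ⬝ᵥ ((V (t : ℕ) (a t))⁻¹ *ᵥ z t)) :=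
          min_eq_right (Real.sqrt_le_one.2 h)
        rw [hmt, Real.sq_sqrt hW, min_eq_right h]
      · have h1 : (1:ℝ) ≤ Real.sqrt (z t ⬝ᵥ ((V (t : ℕ) (a t))⁻¹ *ᵥ z t)) := by
          rw [show (1:ℝ) = Real.sqrt 1 from (Real.sqrt_one).symm]
          exact Real.sqrt_le_sqrt h.le
        have hmt : m t = 1 := min_eq_left h1
        rw [hmt, one_pow, min_eq_left h.le]
    rw [hmin]
    exact min_one_le_two_log hW
  have hsum_m_sq : (∑ t, m t ^ 2) ≤ 2 * (D * Real.log X) := by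
    calc (∑ t, m t ^ 2)
        ≤ ∑ t, 2 * Real.log (1 + z t ⬝ᵥ ((V (t : ℕ) (a t))⁻¹ *ᵥ z t)) :=
          Finset.sum_le_sum fun t _ => hmsq t
      _ = 2 * ∑ t, Real.log (1 + z t ⬝ᵥ ((V (t : ℕ) (a t))⁻¹ *ᵥ z t)) := by
          rw [Finset.mul_sum]
      _ ≤ 2 * (D * Real.log X) := by linarith [hlogsum]
  have hsum_m : (∑ t, m t) ≤ Real.sqrt (2 * T * n * ((k : ℝ) + 1) * Real.log X) := by
    have h1 : (∑ t, m t) ^ 2 ≤ (T : ℝ) * ∑ t, m t ^ 2 := by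
      have := sq_sum_le_card_mul_sum_sq (s := (Finset.univ : Finset (Fin T))) (f := m)
      simpa using this
    have h2 : (∑ t, m t) ^ 2 ≤ 2 * T * n * ((k : ℝ) + 1) * Real.log X := by
      have h3 : (T : ℝ) * ∑ t, m t ^ 2 ≤ (T : ℝ) * (2 * (D * Real.log X)) :=
        mul_le_mul_of_nonneg_left hsum_m_sq (by positivity)
      have h4 : (T : ℝ) * (2 * (D * Real.log X)) = 2 * T * n * ((k : ℝ) + 1) * Real.log X := by
        rw [hD]; ring
      linarith
    calc (∑ t, m t) = Real.sqrt ((∑ t, m t) ^ 2) :=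
          (Real.sqrt_sq (Finset.sum_nonneg fun t _ => hm0 t)).symm
      _ ≤ Real.sqrt (2 * T * n * ((k : ℝ) + 1) * Real.log X) := Real.sqrt_le_sqrt h2
  calc (∑ t, ρ t) ≤ ∑ t, 2 * B * m t := Finset.sum_le_sum fun t _ => hρ t
    _ = 2 * B * ∑ t, m t := by rw [Finset.mul_sum]
    _ ≤ 2 * B * Real.sqrt (2 * T * n * ((k : ℝ) + 1) * Real.log X) :=
        mul_le_mul_of_nonneg_left hsum_m (by positivity)
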